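/- Let f be a real polynomial of degree K > 1 with positive leading coefficient such that all complex roots of f' are real, listed with multiplicity as β_{K−1} ≤ ... ≤ β_1. Then all complex roots of f are real and non-negative if and only if: f(β_i) ≤ 0 for odd i, f(β_i) ≥ 0 for even i, β_{K−1} ≥ 0, and (−1)^K f(0) ≥ 0. -/

import Mathlib

open Polynomial Multiset Set Filter
open scoped Classical

private lemma rolle_aux : ∀ (N : ℕ) (p : ℝ[X]) (hp : p ≠ 0) (s : Set ℝ) (hs : s.OrdConnected),
    Multiset.card (p.roots.filter (· ∈ s)) ≤ N →
    Multiset.card (p.roots.filter (· ∈ s)) ≤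
      Multiset.card (p.derivative.roots.filter (· ∈ s)) + 1 := by
  intro N
  induction N with
  | zero => intro p hp s hs h; omega
  | succ N IH =>
    intro p hp s hs hcard
    set M : Multiset ℝ := p.roots.filter (· ∈ s) with hM
    rcases eq_or_ne M 0 with h0 | h0
    · rw [h0]; simp
    have hMne : M.toFinset.Nonempty := by
      rw [Multiset.toFinset_nonempty]; exact h0
    set x := M.toFinset.max' hMne with hx
    have hxM : x ∈ M := Multiset.mem_toFinset.mp (M.toFinset.max'_mem hMne)
    have hxroot : p.IsRoot x ∧ x ∈ s := by
      have := Multiset.mem_filter.mp hxM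
      exact ⟨(mem_roots hp).mp this.1, this.2⟩
    have hmax : ∀ z ∈ M, z ≤ x := fun z hz =>
      M.toFinset.le_max' z (Multiset.mem_toFinset.mpr hz)
    have hm1 : 1 ≤ p.rootMultiplicity x := (rootMultiplicity_pos hp).mpr hxroot.1
    have hcountM : M.count x = p.rootMultiplicity x := by
      rw [hM, Multiset.count_filter_of_pos hxroot.2, count_roots]
    have hp' : derivative p ≠ 0 := fun h => by
      have h0' : p.natDegree = 0 := natDegree_eq_zero_of_derivative_eq_zero h
      have hpc : p = C (p.coeff 0) := eq_C_of_natDegree_eq_zero h0'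
      have hev := hxroot.1
      rw [IsRoot, hpc, eval_C] at hev
      rw [hpc, hev, C_0] at hp
      exact hp rfl
    have hcount' : (derivative p).rootMultiplicity x = p.rootMultiplicity x - 1 :=
      derivative_rootMultiplicity_of_root hxroot.1
    by_cases hone : ∀ z ∈ M, z = x
    · have hrep : M = Multiset.replicate (Multiset.card M) x := by
        rw [Multiset.eq_replicate_card]; exact hone
      have hMcard : Multiset.card M = p.rootMultiplicity x := by
        conv_lhs at hcountM => rw [hrep]
        rw [Multiset.count_replicate] at hcountM
        simpa using hcountM
      have hge : p.rootMultiplicity x - 1 ≤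
          Multiset.card ((derivative p).roots.filter (· ∈ s)) := by
        calc p.rootMultiplicity x - 1
            = ((derivative p).roots.filter (· ∈ s)).count x := by
              rw [Multiset.count_filter_of_pos hxroot.2, count_roots, hcount']
          _ ≤ _ := Multiset.count_le_card _ _
      omega
    · push_neg at hone
      obtain ⟨z, hzM, hzx⟩ := hone
      have hFne : ((M.toFinset).erase x).Nonempty :=
        ⟨z, Finset.mem_erase.mpr ⟨hzx, Multiset.mem_toFinset.mpr hzM⟩⟩
      set x' := ((M.toFinset).erase x).max' hFne with hx'
      have hx'mem : x' ∈ (M.toFinset).erase x := Finset.max'_mem _ _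
      have hx'M : x' ∈ M := Multiset.mem_toFinset.mp (Finset.mem_erase.mp hx'mem).2
      have hx'ne : x' ≠ x := (Finset.mem_erase.mp hx'mem).1
      have hx'lt : x' < x := lt_of_le_of_ne (hmax _ hx'M) hx'ne
      have hx'root : p.IsRoot x' ∧ x' ∈ s := by
        have := Multiset.mem_filter.mp hx'M
        exact ⟨(mem_roots hp).mp this.1, this.2⟩
      have hx'max : ∀ z ∈ M, z ≠ x → z ≤ x' := fun z hz hne =>
        Finset.le_max' _ z (Finset.mem_erase.mpr ⟨hne, Multiset.mem_toFinset.mpr hz⟩)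
      obtain ⟨y, hy, hy0⟩ := exists_deriv_eq_zero hx'lt p.continuousOn
        (hx'root.1.trans hxroot.1.symm)
      rw [Polynomial.deriv] at hy0
      have hys : y ∈ s := hs.out hx'root.2 hxroot.2 ⟨hy.1.le, hy.2.le⟩
      obtain ⟨s₂, hs₂⟩ : ∃ t : Set ℝ, t = s ∩ Iic x' := ⟨_, rfl⟩
      have hs₂oc : s₂.OrdConnected := hs₂ ▸ hs.inter ordConnected_Iic
      have hs₂mem : ∀ a : ℝ, a ∈ s₂ ↔ a ∈ s ∧ a ≤ x' := by
        intro a; rw [hs₂]; exact Set.mem_inter_iff _ _ _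
      have hfilteq : ∀ (q : ℝ[X]), (q.roots.filter (· ∈ s)).filter (· ≤ x')
          = q.roots.filter (· ∈ s₂) := by
        intro q
        rw [Multiset.filter_filter]
        apply Multiset.filter_congr
        intro a _
        rw [hs₂mem a]
        tauto
      have hd1 : Multiset.card M =
          Multiset.card (p.roots.filter (· ∈ s₂)) + p.rootMultiplicity x := by
        have hsplit := Multiset.filter_add_not (· ≤ x') M
        have h2 : M.filter (fun z => ¬ z ≤ x') =
            Multiset.replicate (p.rootMultiplicity x) x := by
          have hall : ∀ z ∈ M.filter (fun z => ¬ z ≤ x'), z = x := by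
            intro z hz
            have := Multiset.mem_filter.mp hz
            by_contra hne
            exact this.2 (hx'max z this.1 hne)
          have hcnt : (M.filter (fun z => ¬ z ≤ x')).count x = p.rootMultiplicity x := by
            rw [Multiset.count_filter_of_pos (by exact not_le.mpr hx'lt), hcountM]
          rw [Multiset.eq_replicate_card.mpr hall] at hcnt ⊢
          simp only [Multiset.count_replicate, eq_self_iff_true, if_true] at hcnt
          rw [hcnt]
        have hcc := congrArg Multiset.card hsplit
        rw [Multiset.card_add, h2, Multiset.card_replicate, hfilteq p] at hcc
        omega
      have hd3 : Multiset.card ((derivative p).roots.filter (· ∈ s₂)) + 1 +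
          (p.rootMultiplicity x - 1)
          ≤ Multiset.card ((derivative p).roots.filter (· ∈ s)) := by
        set D := (derivative p).roots.filter (· ∈ s) with hD
        have hsplit := Multiset.filter_add_not (· ≤ x') D
        have hsub : Multiset.replicate (p.rootMultiplicity x - 1) x + {y} ≤
            D.filter (fun z => ¬ z ≤ x') := by
          rw [Multiset.le_iff_count]
          intro a
          rw [Multiset.count_add, Multiset.count_replicate, Multiset.count_singleton]
          by_cases hax : x = a
          · rw [if_pos hax, if_neg (by rw [← hax]; exact (ne_of_gt hy.2))]
            have hcc : Multiset.count a (D.filter (fun z => ¬ z ≤ x')) =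
                p.rootMultiplicity x - 1 := by
              rw [Multiset.count_filter_of_pos (by rw [← hax]; exact not_le.mpr hx'lt), hD,
                Multiset.count_filter_of_pos (by rw [← hax]; exact hxroot.2), count_roots,
                ← hax, hcount']
            omega
          · rw [if_neg hax]
            by_cases hay : a = y
            · rw [if_pos hay]
              have hcc : 1 ≤ Multiset.count a (D.filter fun z => ¬ z ≤ x') := by
                rw [Multiset.count_filter_of_pos (by rw [hay]; exact not_le.mpr hy.1), hD,
                  Multiset.count_filter_of_pos (by rw [hay]; exact hys), count_roots, hay]
                exact (rootMultiplicity_pos hp').mpr hy0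
              omega
            · rw [if_neg hay]; simp
        have hcard2 : (p.rootMultiplicity x - 1) + 1 ≤
            Multiset.card (D.filter (fun z => ¬ z ≤ x')) := by
          have := Multiset.card_le_card hsub
          simpa using this
        have hcc := congrArg Multiset.card hsplit
        rw [Multiset.card_add, hfilteq (derivative p)] at hcc
        omega
      have hIH := IH p hp s₂ hs₂oc (by omega)
      omega

private lemma rolle_count (p : ℝ[X]) (hp : p ≠ 0) (s : Set ℝ) (hs : s.OrdConnected) :
    Multiset.card (p.roots.filter (· ∈ s)) ≤
      Multiset.card (p.derivative.roots.filter (· ∈ s)) + 1 :=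
  rolle_aux _ p hp s hs le_rfl

private lemma ofFn_eq_map_univ {n : ℕ} {α : Type*} (g : Fin n → α) :
    (↑(List.ofFn g) : Multiset α) = Multiset.map g (Finset.univ : Finset (Fin n)).val := by
  rw [List.ofFn_eq_map, Fin.univ_def]
  rfl

private lemma ofFn_filter_card {n : ℕ} (g : Fin n → ℝ) (P : ℝ → Prop) [DecidablePred P] :
    Multiset.card ((↑(List.ofFn g) : Multiset ℝ).filter P)
      = (Finset.univ.filter (fun j => P (g j))).card := by
  rw [ofFn_eq_map_univ, ← Multiset.countP_eq_card_filter, Multiset.countP_map]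
  rfl

private lemma ofFn_count {n : ℕ} (g : Fin n → ℝ) (v : ℝ) :
    Multiset.count v (↑(List.ofFn g) : Multiset ℝ)
      = (Finset.univ.filter (fun j => g j = v)).card := by
  rw [Multiset.count_eq_card_filter_eq, ← Multiset.countP_eq_card_filter, ofFn_eq_map_univ,
    Multiset.countP_map]
  have : ∀ j : Fin n, (v = g j) = (g j = v) := fun j => propext eq_comm
  simp only [this]
  rfl

private lemma ofFn_prod {n : ℕ} (g : Fin n → ℝ) :
    (↑(List.ofFn g) : Multiset ℝ).prod = ∏ i, g i := by
  rw [ofFn_eq_map_univ]; rfl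

theorem stmt4 (f : Polynomial ℝ) (hK : 1 < f.natDegree) (hl : 0 < f.leadingCoeff)
    (β : Fin (f.natDegree - 1) → ℝ) (hanti : Antitone β)
    (hroots : (Polynomial.derivative f).roots = ↑(List.ofFn β)) :
    (∀ z : ℂ, Polynomial.aeval z f = 0 → z.im = 0 ∧ 0 ≤ z.re) ↔
      ((∀ i : Fin (f.natDegree - 1),
          (Odd (i.1 + 1) → f.eval (β i) ≤ 0) ∧ (Even (i.1 + 1) → 0 ≤ f.eval (β i))) ∧
        0 ≤ β ⟨f.natDegree - 2, by omega⟩ ∧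
        0 ≤ (-1 : ℝ) ^ f.natDegree * f.eval 0) := by
  have hf0 : f ≠ 0 := fun h => by simp [h] at hl
  have hdeg : 0 < f.degree := natDegree_pos_iff_degree_pos.mp (by omega)
  have hcont : Continuous fun x : ℝ => eval x f := f.continuous
  have hβmem : ∀ j : Fin (f.natDegree - 1), β j ∈ (derivative f).roots := by
    intro j; rw [hroots, Multiset.mem_coe, List.mem_ofFn]; exact ⟨j, rfl⟩
  have hcard' : Multiset.card (derivative f).roots = f.natDegree - 1 := by
    rw [hroots, Multiset.coe_card, List.length_ofFn]
  constructor
  · intro hz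
    have hmapne : f.map (algebraMap ℝ ℂ) ≠ 0 :=
      (Polynomial.map_ne_zero_iff (algebraMap ℝ ℂ).injective).mpr hf0
    have hccard : Multiset.card (f.map (algebraMap ℝ ℂ)).roots = f.natDegree := by
      rw [splits_iff_card_roots.mp
        (IsAlgClosed.splits _), natDegree_map]
    have hle2 : (f.map (algebraMap ℝ ℂ)).roots ≤ f.roots.map (algebraMap ℝ ℂ) := by
      rw [Multiset.le_iff_count]
      intro w
      by_cases hwr : w ∈ (f.map (algebraMap ℝ ℂ)).roots
      · have hw0 : aeval w f = 0 := by
          have := (mem_roots hmapne).mp hwr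
          rw [IsRoot, eval_map, ← aeval_def] at this; exact this
        obtain ⟨him, hre⟩ := hz w hw0
        have hw : w = algebraMap ℝ ℂ w.re := by
          apply Complex.ext <;> simp [him]
        rw [count_roots, hw, ← eq_rootMultiplicity_map (algebraMap ℝ ℂ).injective,
          Multiset.count_map_eq_count' _ _ (algebraMap ℝ ℂ).injective, count_roots]
      · rw [Multiset.count_eq_zero_of_notMem hwr]
        omega
    have hcardroots : Multiset.card f.roots = f.natDegree := by
      have hcc := Multiset.card_le_card hle2
      rw [Multiset.card_map, hccard] at hcc
      exact le_antisymm (card_roots' f) hcc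
    have hrnn : ∀ a ∈ f.roots, 0 ≤ a := by
      intro a ha
      have hroot : eval a f = 0 := (mem_roots hf0).mp ha
      have har : aeval ((algebraMap ℝ ℂ) a) f = 0 := by
        rw [aeval_def, eval₂_at_apply, hroot, (algebraMap ℝ ℂ).map_zero]
      simpa using (hz _ har).2
    refine ⟨?_, ?_, ?_⟩
    · -- sign conditions
      intro i
      by_cases hfβ : eval (β i) f = 0
      · exact ⟨fun _ => le_of_eq hfβ, fun _ => le_of_eq hfβ.symm⟩
      · have hioi : Multiset.card (f.roots.filter (· ∈ Ioi (β i))) ≤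
            Multiset.card ((derivative f).roots.filter (· ∈ Ioi (β i))) + 1 := by
          convert rolle_count f hf0 (Ioi (β i)) ordConnected_Ioi
        have hiio : Multiset.card (f.roots.filter (· ∈ Iio (β i))) ≤
            Multiset.card ((derivative f).roots.filter (· ∈ Iio (β i))) + 1 := by
          convert rolle_count f hf0 (Iio (β i)) ordConnected_Iio
        have hne : ∀ a ∈ f.roots, a ≠ β i := by
          intro a ha hae
          exact hfβ (hae ▸ ((mem_roots hf0).mp ha))
        have hcng : f.roots.filter (fun a => ¬ a ∈ Iio (β i)) =
            f.roots.filter (· ∈ Ioi (β i)) := by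
          apply Multiset.filter_congr
          intro a ha
          simp only [Set.mem_Iio, Set.mem_Ioi, not_lt]
          constructor
          · intro hge; exact lt_of_le_of_ne hge ((hne a ha).symm)
          · intro h'; exact le_of_lt h'
        have hsplitroots : f.roots.filter (· ∈ Iio (β i)) + f.roots.filter (· ∈ Ioi (β i))
            = f.roots := by
          rw [← hcng]
          exact Multiset.filter_add_not _ _
        have hsplitf : Multiset.card (f.roots.filter (· ∈ Iio (β i))) +
            Multiset.card (f.roots.filter (· ∈ Ioi (β i))) = f.natDegree := by
          have := congrArg Multiset.card hsplitroots
          rw [Multiset.card_add] at this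
          rw [this, hcardroots]
        have hsplitd : Multiset.card ((derivative f).roots.filter (· ∈ Iio (β i))) +
            (Multiset.count (β i) (derivative f).roots +
             Multiset.card ((derivative f).roots.filter (· ∈ Ioi (β i)))) = f.natDegree - 1 := by
          have h1 := Multiset.filter_add_not (· ∈ Iio (β i)) (derivative f).roots
          have h2 := Multiset.filter_add_not (· = β i)
            ((derivative f).roots.filter (fun a => ¬ a ∈ Iio (β i)))
          have h3 : (((derivative f).roots.filter (fun a => ¬ a ∈ Iio (β i))).filter (· = β i))
              = (derivative f).roots.filter (fun a => β i = a) := by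
            rw [Multiset.filter_filter]
            apply Multiset.filter_congr
            intro a _
            simp only [Set.mem_Iio, not_lt]
            constructor
            · rintro ⟨h', _⟩; exact h'.symm
            · rintro h'; exact ⟨h'.symm, by rw [← h']⟩
          have h4 : (((derivative f).roots.filter (fun a => ¬ a ∈ Iio (β i))).filter
                (fun a => ¬ a = β i))
              = (derivative f).roots.filter (· ∈ Ioi (β i)) := by
            rw [Multiset.filter_filter]
            apply Multiset.filter_congr
            intro a _
            simp only [Set.mem_Iio, Set.mem_Ioi, not_lt]
            constructor
            · rintro ⟨hne', hge⟩; exact lt_of_le_of_ne hge (Ne.symm hne')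
            · intro h'; exact ⟨ne_of_gt h', le_of_lt h'⟩
          have hcnt : Multiset.card ((derivative f).roots.filter (fun a => β i = a))
              = Multiset.count (β i) (derivative f).roots := by
            rw [Multiset.count_eq_card_filter_eq]
          have hc1 := congrArg Multiset.card h1
          have hc2 := congrArg Multiset.card h2
          rw [Multiset.card_add] at hc1 hc2
          rw [h3, h4, hcnt] at hc2
          rw [hcard'] at hc1
          omega
        have hd1 : 1 ≤ Multiset.count (β i) (derivative f).roots :=
          Multiset.one_le_count_iff_mem.mpr (hβmem i)
        have hcnt1 : Multiset.count (β i) (derivative f).roots = 1 := by omega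
        have haval : Multiset.card (f.roots.filter (· ∈ Ioi (β i))) =
            Multiset.card ((derivative f).roots.filter (· ∈ Ioi (β i))) + 1 := by omega
        have hcI : Multiset.card ((derivative f).roots.filter (· ∈ Ioi (β i))) = i.1 := by
          rw [hroots, ofFn_filter_card]
          have hset : Finset.univ.filter (fun j => β j ∈ Ioi (β i)) = Finset.Iio i := by
            ext j
            simp only [Finset.mem_filter, Finset.mem_univ, true_and, Finset.mem_Iio,
              Set.mem_Ioi]
            constructor
            · intro hβj
              by_contra hij
              push_neg at hij
              exact absurd hβj (not_lt.mpr (hanti hij))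
            · intro hji
              rcases lt_or_eq_of_le (hanti hji.le) with h | h
              · exact h
              · exfalso
                have h2c : 2 ≤ Multiset.count (β i) (derivative f).roots := by
                  rw [hroots, ofFn_count]
                  have hsubset : ({j, i} : Finset _) ⊆
                      Finset.univ.filter (fun k => β k = β i) := by
                    intro k hk
                    simp only [Finset.mem_insert, Finset.mem_singleton] at hk
                    rcases hk with rfl | rfl
                    · simp [← h]
                    · simp
                  calc 2 = ({j, i} : Finset _).card := by
                        rw [Finset.card_insert_of_notMem (by simp [hji.ne]),
                          Finset.card_singleton]
                    _ ≤ _ := Finset.card_le_card hsubset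
                omega
          rw [hset, Fin.card_Iio]
        have hcIoi : Multiset.card (f.roots.filter (· ∈ Ioi (β i))) = i.1 + 1 := by omega
        -- evaluate sign
        have hsp := Splits.eq_prod_roots (splits_iff_card_roots.mpr hcardroots)
        have he : eval (β i) f =
            f.leadingCoeff * ((f.roots.map (fun a => β i - a)).prod) := by
          conv_lhs => rw [hsp]
          rw [eval_mul, eval_C, eval_multiset_prod, Multiset.map_map]
          congr 2
          apply Multiset.map_congr rfl
          intro a _; simp
        have hprodIio : 0 < ((f.roots.filter (· ∈ Iio (β i))).map (fun a => β i - a)).prod := by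
          apply Multiset.prod_pos
          intro b hb
          obtain ⟨a, ha, rfl⟩ := Multiset.mem_map.mp hb
          have := (Multiset.mem_filter.mp ha).2
          rw [Set.mem_Iio] at this
          linarith
        have hprodIoipos : 0 < ((f.roots.filter (· ∈ Ioi (β i))).map (fun a => a - β i)).prod := by
          apply Multiset.prod_pos
          intro b hb
          obtain ⟨a, ha, rfl⟩ := Multiset.mem_map.mp hb
          have := (Multiset.mem_filter.mp ha).2
          rw [Set.mem_Ioi] at this
          linarith
        have hneg : ((f.roots.filter (· ∈ Ioi (β i))).map (fun a => β i - a)).prod =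
            (-1 : ℝ) ^ (i.1 + 1) *
              ((f.roots.filter (· ∈ Ioi (β i))).map (fun a => a - β i)).prod := by
          have hmm : ((f.roots.filter (· ∈ Ioi (β i))).map (fun a => β i - a)) =
              (((f.roots.filter (· ∈ Ioi (β i))).map (fun a => a - β i)).map Neg.neg) := by
            rw [Multiset.map_map]
            apply Multiset.map_congr rfl
            intro a _
            simp
          rw [hmm, Multiset.prod_map_neg, Multiset.card_map, hcIoi]
        have heval2 : eval (β i) f = (-1 : ℝ) ^ (i.1 + 1) *
            (f.leadingCoeff *
              (((f.roots.filter (· ∈ Iio (β i))).map (fun a => β i - a)).prod *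
               ((f.roots.filter (· ∈ Ioi (β i))).map (fun a => a - β i)).prod)) := by
          rw [he]
          conv_lhs => rw [← hsplitroots]
          rw [Multiset.map_add, Multiset.prod_add, hneg]
          ring
        have hQ : 0 < f.leadingCoeff *
            (((f.roots.filter (· ∈ Iio (β i))).map (fun a => β i - a)).prod *
             ((f.roots.filter (· ∈ Ioi (β i))).map (fun a => a - β i)).prod) := by
          apply mul_pos hl (mul_pos hprodIio hprodIoipos)
        constructor
        · intro hodd
          rw [heval2, hodd.neg_one_pow]
          linarith
        · intro heven
          rw [heval2, heven.neg_one_pow]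
          linarith
    · -- smallest critical point nonneg
      have h1 : Multiset.card (f.roots.filter (· ∈ Set.Ici (0:ℝ))) ≤
          Multiset.card ((derivative f).roots.filter (· ∈ Set.Ici (0:ℝ))) + 1 := by
        convert rolle_count f hf0 (Set.Ici (0:ℝ)) ordConnected_Ici
      have hfull : f.roots.filter (· ∈ Set.Ici (0:ℝ)) = f.roots :=
        Multiset.filter_eq_self.mpr (fun a ha => hrnn a ha)
      rw [hfull, hcardroots] at h1
      have heq : (derivative f).roots.filter (· ∈ Set.Ici (0:ℝ)) = (derivative f).roots :=
        Multiset.eq_of_le_of_card_le (Multiset.filter_le _ _) (by rw [hcard']; omega)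
      have hmem := hβmem ⟨f.natDegree - 2, by omega⟩
      rw [← heq] at hmem
      exact Set.mem_Ici.mp (Multiset.mem_filter.mp hmem).2
    · -- product condition
      have hsp := Splits.eq_prod_roots (splits_iff_card_roots.mpr hcardroots)
      have he : eval 0 f = f.leadingCoeff * ((f.roots.map (fun a => -a)).prod) := by
        conv_lhs => rw [hsp]
        rw [eval_mul, eval_C, eval_multiset_prod, Multiset.map_map]
        congr 2
        apply Multiset.map_congr rfl
        intro a _; simp
      have hmapneg : ((f.roots.map (fun a => -a)).prod) =
          (-1 : ℝ) ^ f.natDegree * f.roots.prod := by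
        have hmm : (f.roots.map (fun a => -a)) = f.roots.map Neg.neg := rfl
        rw [hmm, Multiset.prod_map_neg, hcardroots]
      have hpr : 0 ≤ f.roots.prod := Multiset.prod_nonneg hrnn
      rw [he, hmapneg]
      rcases Nat.even_or_odd f.natDegree with hp | hp
      · rw [hp.neg_one_pow]
        simp only [one_mul]
        exact mul_nonneg hl.le hpr
      · rw [hp.neg_one_pow]
        have := mul_nonneg hl.le hpr
        nlinarith
  · rintro ⟨hsign, hβ0, hf00⟩ z hzroot
    -- existence of roots
    have hex : ∀ i : Fin f.natDegree, ∃ t, eval t f = 0 ∧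
        (∀ h : i.1 < f.natDegree - 1, β ⟨i.1, h⟩ ≤ t) ∧
        (∀ h : 1 ≤ i.1, t ≤ β ⟨i.1 - 1, by omega⟩) := by
      intro i
      rcases Nat.eq_zero_or_pos i.1 with h0 | h1
      · -- top root
        have hodd : Odd ((0 : ℕ) + 1) := odd_one
        have h1 : eval (β ⟨0, by omega⟩) f ≤ 0 := (hsign ⟨0, by omega⟩).1 hodd
        have htop : Tendsto (fun x => eval x f) atTop atTop :=
          f.tendsto_atTop_of_leadingCoeff_nonneg hdeg hl.le
        obtain ⟨b, hb1, hb2⟩ :=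
          ((htop.eventually_ge_atTop 0).and (eventually_ge_atTop (β ⟨0, by omega⟩))).exists
        obtain ⟨t, ht, htv⟩ := intermediate_value_Icc hb2 hcont.continuousOn ⟨h1, hb1⟩
        refine ⟨t, htv, fun h => ?_, fun h => absurd h (by omega)⟩
        have he : (⟨i.1, h⟩ : Fin (f.natDegree - 1)) = ⟨0, by omega⟩ := Fin.ext h0
        rw [he]; exact ht.1
      · rcases lt_or_ge i.1 (f.natDegree - 1) with h2 | h2
        · -- middle root
          have hord : β ⟨i.1, h2⟩ ≤ β ⟨i.1 - 1, by omega⟩ :=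
            hanti (by rw [Fin.mk_le_mk]; omega)
          obtain ⟨t, ht, htv⟩ : ∃ t, t ∈ Icc (β ⟨i.1, h2⟩) (β ⟨i.1 - 1, by omega⟩) ∧
              eval t f = 0 := by
            rcases Nat.even_or_odd (i.1 + 1) with he | ho
            · have hv1 : 0 ≤ eval (β ⟨i.1, h2⟩) f := (hsign _).2 he
              have hv0 : eval (β ⟨i.1 - 1, by omega⟩) f ≤ 0 := (hsign _).1 (by
                show Odd (i.1 - 1 + 1)
                rw [Nat.odd_iff]; rw [Nat.even_iff] at he; omega)
              obtain ⟨t, ht, htv⟩ := intermediate_value_Icc' hord hcont.continuousOn ⟨hv0, hv1⟩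
              exact ⟨t, ht, htv⟩
            · have hv1 : eval (β ⟨i.1, h2⟩) f ≤ 0 := (hsign _).1 ho
              have hv0 : 0 ≤ eval (β ⟨i.1 - 1, by omega⟩) f := (hsign _).2 (by
                show Even (i.1 - 1 + 1)
                rw [Nat.even_iff]; rw [Nat.odd_iff] at ho; omega)
              obtain ⟨t, ht, htv⟩ := intermediate_value_Icc hord hcont.continuousOn ⟨hv1, hv0⟩
              exact ⟨t, ht, htv⟩
          exact ⟨t, htv, fun h => ht.1, fun h => ht.2⟩
        · -- bottom root
          have hieq : i.1 = f.natDegree - 1 := by omega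
          have hj : (0:ℕ) < f.natDegree - 1 := by omega
          set j : Fin (f.natDegree - 1) := ⟨f.natDegree - 2, by omega⟩ with hjdef
          set g : ℝ[X] := f.comp (-X) with hg
          have hgeval : ∀ y : ℝ, eval y g = eval (-y) f := by
            intro y; rw [hg, eval_comp]; simp
          have hgnd : g.natDegree = f.natDegree := by
            rw [hg, natDegree_comp]; simp
          have hgdeg : 0 < g.degree := natDegree_pos_iff_degree_pos.mp (by rw [hgnd]; omega)
          have hglc : g.leadingCoeff = f.leadingCoeff * (-1) ^ f.natDegree := by
            rw [hg, leadingCoeff_comp (by simp)]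
            simp
          rcases Nat.even_or_odd f.natDegree with he | ho
          · have hv : eval (β j) f ≤ 0 := (hsign j).1 (by
              show Odd (f.natDegree - 2 + 1)
              rw [Nat.odd_iff]; rw [Nat.even_iff] at he; omega)
            have hglc' : 0 ≤ g.leadingCoeff := by rw [hglc, he.neg_one_pow, mul_one]; exact hl.le
            have htop : Tendsto (fun x => eval x g) atTop atTop :=
              g.tendsto_atTop_of_leadingCoeff_nonneg hgdeg hglc'
            obtain ⟨b, hb1, hb2⟩ :=
              ((htop.eventually_ge_atTop 0).and (eventually_ge_atTop (-(β j)))).exists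
            rw [hgeval b] at hb1
            have hble : -b ≤ β j := by linarith
            obtain ⟨t, ht, htv⟩ := intermediate_value_Icc' hble hcont.continuousOn ⟨hv, hb1⟩
            refine ⟨t, htv, fun h => absurd h (by omega), fun h => ?_⟩
            have he2 : (⟨i.1 - 1, by omega⟩ : Fin (f.natDegree - 1)) = j := Fin.ext (by
              show i.1 - 1 = f.natDegree - 2; omega)
            rw [he2]; exact ht.2
          · have hv : 0 ≤ eval (β j) f := (hsign j).2 (by
              show Even (f.natDegree - 2 + 1)
              rw [Nat.even_iff]; rw [Nat.odd_iff] at ho; omega)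
            have hglc' : g.leadingCoeff ≤ 0 := by
              rw [hglc, ho.neg_one_pow, mul_neg_one]; linarith
            have hbot : Tendsto (fun x => eval x g) atTop atBot :=
              g.tendsto_atBot_of_leadingCoeff_nonpos hgdeg hglc'
            obtain ⟨b, hb1, hb2⟩ :=
              ((hbot.eventually_le_atBot 0).and (eventually_ge_atTop (-(β j)))).exists
            rw [hgeval b] at hb1
            have hble : -b ≤ β j := by linarith
            obtain ⟨t, ht, htv⟩ := intermediate_value_Icc hble hcont.continuousOn ⟨hb1, hv⟩
            refine ⟨t, htv, fun h => absurd h (by omega), fun h => ?_⟩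
            have he2 : (⟨i.1 - 1, by omega⟩ : Fin (f.natDegree - 1)) = j := Fin.ext (by
              show i.1 - 1 = f.natDegree - 2; omega)
            rw [he2]; exact ht.2
    choose r hr0 hrA hrB using hex
    -- the multiset of roots
    have hle : (↑(List.ofFn r) : Multiset ℝ) ≤ f.roots := by
      rw [Multiset.le_iff_count]
      intro v
      rw [ofFn_count]
      set S := Finset.univ.filter (fun j => r j = v) with hS
      rcases Nat.eq_zero_or_pos S.card with h0 | h1
      · rw [h0]; omega
      · have hSne : S.Nonempty := Finset.card_pos.mp h1
        obtain ⟨i0, hi0⟩ := hSne.exists_mem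
        have hi0v : r i0 = v := (Finset.mem_filter.mp hi0).2
        have hv : f.IsRoot v := by rw [IsRoot, ← hi0v]; exact hr0 i0
        have hm1 : 1 ≤ f.rootMultiplicity v := (rootMultiplicity_pos hf0).mpr hv
        rw [count_roots]
        rcases Nat.lt_or_ge S.card 2 with h2 | h2
        · omega
        · -- at least two indices: deduce multiplicity
          set M := S.max' hSne with hM
          have hβv : ∀ i ∈ S.erase M, i.1 < f.natDegree - 1 ∧
              ∀ h : i.1 < f.natDegree - 1, β ⟨i.1, h⟩ = v := by
            intro i hi
            have hiS : i ∈ S := Finset.mem_of_mem_erase hi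
            have hiM : i ≠ M := Finset.ne_of_mem_erase hi
            have hilt : i < M := lt_of_le_of_ne (S.le_max' i hiS) hiM
            have hMub : M.1 ≤ f.natDegree - 1 := by omega
            have hlt : i.1 < f.natDegree - 1 := by
              have := hilt
              rw [Fin.lt_def] at this
              omega
            refine ⟨hlt, fun h => ?_⟩
            have hup : β ⟨i.1, h⟩ ≤ v := by
              have := hrA i h
              rw [(Finset.mem_filter.mp hiS).2] at this
              -- this : β ⟨i.1, h⟩ ≤ v
              exact this
            have hMS : M ∈ S := S.max'_mem hSne
            have hrMv : r M = v := (Finset.mem_filter.mp hMS).2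
            have hM1 : 1 ≤ M.1 := by
              rw [Fin.lt_def] at hilt; omega
            have hdown : v ≤ β ⟨M.1 - 1, by omega⟩ := by
              have := hrB M hM1
              rw [hrMv] at this; exact this
            have hmono : β ⟨M.1 - 1, by omega⟩ ≤ β ⟨i.1, h⟩ := hanti (by
              rw [Fin.le_def]; simp; rw [Fin.lt_def] at hilt; omega)
            linarith
          -- inject erase into B
          set B := Finset.univ.filter (fun j : Fin (f.natDegree - 1) => β j = v) with hB
          have hcardle : S.card - 1 ≤ B.card := by
            rw [← Finset.card_erase_of_mem (S.max'_mem hSne)]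
            apply Finset.card_le_card_of_injOn
              (fun i => ⟨min i.1 (f.natDegree - 2), by omega⟩)
            · intro i hi
              obtain ⟨hlt, hbeq⟩ := hβv i hi
              have hmin : min i.1 (f.natDegree - 2) = i.1 := by omega
              rw [hB, Finset.mem_coe, Finset.mem_filter]
              refine ⟨Finset.mem_univ _, ?_⟩
              have : (⟨min i.1 (f.natDegree - 2), by omega⟩ : Fin (f.natDegree - 1))
                  = ⟨i.1, hlt⟩ := Fin.ext hmin
              dsimp only
              rw [this]
              exact hbeq hlt
            · intro i hi i' hi' heq
              obtain ⟨hlt, _⟩ := hβv i hi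
              obtain ⟨hlt', _⟩ := hβv i' hi'
              have : min i.1 (f.natDegree - 2) = min i'.1 (f.natDegree - 2) :=
                congrArg Fin.val heq
              apply Fin.ext
              omega
          have hcntβ : (derivative f).rootMultiplicity v = B.card := by
            rw [← count_roots, hroots, ofFn_count]
          have hder : (derivative f).rootMultiplicity v = f.rootMultiplicity v - 1 :=
            derivative_rootMultiplicity_of_root hv
          omega
    have hlen : Multiset.card (↑(List.ofFn r) : Multiset ℝ) = f.natDegree := by
      rw [Multiset.coe_card, List.length_ofFn]
    have hcardroots : Multiset.card f.roots = f.natDegree :=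
      le_antisymm (card_roots' f) (by rw [← hlen]; exact Multiset.card_le_card hle)
    have hrootseq : f.roots = ↑(List.ofFn r) :=
      (Multiset.eq_of_le_of_card_le hle (by rw [hlen, hcardroots])).symm
    -- nonnegativity of roots
    have hβlast : ∀ k : Fin (f.natDegree - 1), 0 ≤ β k := by
      intro k
      calc (0:ℝ) ≤ β ⟨f.natDegree - 2, by omega⟩ := hβ0
        _ ≤ β k := hanti (by rw [Fin.le_def]; simp; omega)
    have hrnn : ∀ i : Fin f.natDegree, 0 ≤ r i := by
      intro i
      rcases lt_or_ge i.1 (f.natDegree - 1) with h | h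
      · exact le_trans (hβlast ⟨i.1, h⟩) (hrA i h)
      · by_contra hneg
        push_neg at hneg
        -- compute the product of roots
        have hsp := Splits.eq_prod_roots (splits_iff_card_roots.mpr hcardroots)
        have he : eval 0 f = f.leadingCoeff * ((f.roots.map (fun a => -a)).prod) := by
          conv_lhs => rw [hsp]
          rw [eval_mul, eval_C, eval_multiset_prod, Multiset.map_map]
          congr 2
          apply Multiset.map_congr rfl
          intro a _
          simp
        have he2 : eval 0 f = f.leadingCoeff * ((-1) ^ f.natDegree * ∏ j, r j) := by
          rw [he, hrootseq]
          congr 1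
          have : ((↑(List.ofFn r) : Multiset ℝ).map (fun a => -a)) =
              (↑(List.ofFn (fun j => -(r j))) : Multiset ℝ) := by
            rw [Multiset.map_coe, List.map_ofFn]
            rfl
          rw [this, ofFn_prod]
          rw [show (fun j => -(r j)) = (fun j => (-1) * r j) by funext j; ring]
          rw [Finset.prod_mul_distrib, Finset.prod_const, Finset.card_univ, Fintype.card_fin]
        have hprod : 0 ≤ ∏ j, r j := by
          have h2 := hf00
          rw [he2] at h2
          rcases Nat.even_or_odd f.natDegree with hp | hp
          · rw [hp.neg_one_pow] at h2
            simp only [one_mul] at h2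
            nlinarith
          · rw [hp.neg_one_pow] at h2
            simp only [neg_one_mul, neg_mul, mul_neg, neg_neg] at h2
            nlinarith
        -- case on whether another root is zero
        by_cases hzero : ∃ j : Fin f.natDegree, j.1 < f.natDegree - 1 ∧ r j = 0
        · obtain ⟨j, hj, hjz⟩ := hzero
          have hf00' : eval (0:ℝ) f = 0 := by
            have := hr0 j; rw [hjz] at this; exact this
          have hri : eval (r i) f = 0 := hr0 i
          obtain ⟨c, hc, hc0⟩ := exists_deriv_eq_zero hneg hcont.continuousOn
            (hri.trans hf00'.symm)
          rw [Polynomial.deriv] at hc0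
          have hcmem : c ∈ (derivative f).roots := by
            rw [mem_roots']
            exact ⟨(by
                intro hd
                have h2 := hcard'
                rw [hd, roots_zero] at h2
                simp only [Multiset.card_zero] at h2
                omega), hc0⟩
          obtain ⟨k, hk⟩ : ∃ k, β k = c := by
            rw [hroots, Multiset.mem_coe, List.mem_ofFn] at hcmem
            exact hcmem
          have : (0:ℝ) ≤ c := hk ▸ hβlast k
          exact absurd hc.2 (not_lt.mpr this)
        · push_neg at hzero
          have hpos : ∀ j : Fin f.natDegree, j ≠ i → 0 < r j := by
            intro j hj
            have hjlt : j.1 < f.natDegree - 1 := by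
              rcases lt_or_ge j.1 (f.natDegree - 1) with h' | h'
              · exact h'
              · exfalso; apply hj; apply Fin.ext; omega
            have := hzero j hjlt
            have h0le : 0 ≤ r j := le_trans (hβlast ⟨j.1, hjlt⟩) (hrA j hjlt)
            cases lt_or_eq_of_le h0le with
            | inl h => exact h
            | inr h => exact absurd h.symm this
          have : ∏ j, r j < 0 := by
            rw [← Finset.prod_erase_mul _ _ (Finset.mem_univ i)]
            apply mul_neg_of_pos_of_neg
            · apply Finset.prod_pos
              intro j hj
              exact hpos j (Finset.ne_of_mem_erase hj)
            · exact hneg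
          linarith
    -- conclude for z
    have hmaproots := roots_map_of_injective_of_card_eq_natDegree
      (f := algebraMap ℝ ℂ) (algebraMap ℝ ℂ).injective hcardroots
    have hmapne : f.map (algebraMap ℝ ℂ) ≠ 0 :=
      (Polynomial.map_ne_zero_iff (algebraMap ℝ ℂ).injective).mpr hf0
    have hzmem : z ∈ (f.map (algebraMap ℝ ℂ)).roots := by
      rw [mem_roots hmapne]
      rw [IsRoot, eval_map, ← aeval_def]; exact hzroot
    rw [← hmaproots] at hzmem
    obtain ⟨a, ha, haz⟩ := Multiset.mem_map.mp hzmem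
    have h0a : 0 ≤ a := by
      rw [hrootseq, Multiset.mem_coe, List.mem_ofFn] at ha
      obtain ⟨i, hi⟩ := ha
      rw [← hi]; exact hrnn i
    rw [← haz]
    constructor
    · simp
    · simpa using h0a
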